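/- Let 0 < θ < 1/2. Then there exists δ ∈ (0,1) such that (log(1 + |ξ|^(2θ)))^2 − 4|ξ|^2 ≥ 0 for all ξ ∈ ℝ^n with |ξ| ≤ δ, and (log(1 + |ξ|^(2θ)))^2 − 4|ξ|^2 < 0 for all ξ with |ξ| > δ. -/

import Mathlib

theorem exists_delta_discriminant (n : ℕ) (θ : ℝ) (hθ : 0 < θ) (hθ' : θ < 1/2) :
    ∃ δ : ℝ, δ ∈ Set.Ioo (0:ℝ) 1 ∧
      (∀ ξ : EuclideanSpace ℝ (Fin n), ‖ξ‖ ≤ δ →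
        0 ≤ (Real.log (1 + ‖ξ‖ ^ (2 * θ)))^2 - 4 * ‖ξ‖^2) ∧
      (∀ ξ : EuclideanSpace ℝ (Fin n), δ < ‖ξ‖ →
        (Real.log (1 + ‖ξ‖ ^ (2 * θ)))^2 - 4 * ‖ξ‖^2 < 0) := by
  set p : ℝ := 2 * θ with hp
  have hp0 : 0 < p := by positivity
  have hp1 : p < 1 := by simp only [hp]; linarith
  set ψ : ℝ → ℝ := fun r => Real.exp (2 * r) - (1 + r ^ p) with hψdef
  -- strict convexity of ψ on [0, ∞)
  have hexp : StrictConvexOn ℝ (Set.Ici (0:ℝ)) (fun r => Real.exp (2 * r)) := by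
    refine ⟨convex_Ici _, fun x _ y _ hxy a b ha hb hab => ?_⟩
    have h2 : (2:ℝ) * x ≠ 2 * y := by
      intro h; exact hxy (by linarith [mul_left_cancel₀ (two_ne_zero (α := ℝ)) h])
    have := strictConvexOn_exp.2 (Set.mem_univ (2*x)) (Set.mem_univ (2*y)) h2 ha hb hab
    simp only [smul_eq_mul] at this ⊢
    calc Real.exp (2 * (a * x + b * y)) = Real.exp (a * (2*x) + b * (2*y)) := by ring_nf
      _ < a * Real.exp (2*x) + b * Real.exp (2*y) := this
  have hconc : ConcaveOn ℝ (Set.Ici (0:ℝ)) (fun r : ℝ => 1 + r ^ p) := by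
    have := (Real.concaveOn_rpow hp0.le hp1.le).add (concaveOn_const (1:ℝ) (convex_Ici 0))
    convert this using 2 with r
    · rfl
    · simp [add_comm]
  have hψ : StrictConvexOn ℝ (Set.Ici (0:ℝ)) ψ := hexp.sub_concaveOn hconc
  have hψ0 : ψ 0 = 0 := by
    simp [hψdef, Real.zero_rpow hp0.ne']
  -- the point r₀
  set r₀ : ℝ := (1/9 : ℝ) ^ (1/(1-p)) with hr₀def
  have hr₀pos : 0 < r₀ := Real.rpow_pos_of_pos (by norm_num) _
  have hr₀le : r₀ ≤ 1/9 := by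
    have h1 : (1:ℝ) ≤ 1/(1-p) := by
      rw [le_one_div (by norm_num) (by linarith)]; linarith
    calc r₀ ≤ (1/9 : ℝ) ^ (1:ℝ) :=
        Real.rpow_le_rpow_of_exponent_ge (by norm_num) (by norm_num) h1
      _ = 1/9 := Real.rpow_one _
  have h1mp : r₀ ^ (1-p) = 1/9 := by
    rw [hr₀def, ← Real.rpow_mul (by norm_num : (0:ℝ) ≤ 1/9),
      one_div_mul_cancel (by linarith : (1:ℝ) - p ≠ 0), Real.rpow_one]
  have hr₀pow : r₀ ^ p = 9 * r₀ := by
    have h2 : r₀ ^ p * r₀ ^ (1-p) = r₀ := by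
      rw [← Real.rpow_add hr₀pos]; norm_num
    rw [h1mp] at h2; linarith
  have hψr₀ : ψ r₀ < 0 := by
    have hEpos := Real.exp_pos (2*r₀)
    have h3 : 1 - 2*r₀ ≤ Real.exp (-(2*r₀)) := by linarith [Real.add_one_le_exp (-(2*r₀))]
    rw [Real.exp_neg] at h3
    have hE : Real.exp (2*r₀) * (1 - 2*r₀) ≤ 1 := by
      calc Real.exp (2*r₀) * (1-2*r₀) ≤ Real.exp (2*r₀) * (Real.exp (2*r₀))⁻¹ :=
            mul_le_mul_of_nonneg_left h3 hEpos.le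
        _ = 1 := mul_inv_cancel₀ hEpos.ne'
    have hlt : Real.exp (2*r₀) < 1 + 9*r₀ := by
      nlinarith [hE, hr₀pos, hr₀le]
    simp only [hψdef, hr₀pow]
    linarith
  have hψ1 : 0 < ψ 1 := by
    have := Real.add_one_le_exp (2:ℝ)
    simp only [hψdef, Real.one_rpow, mul_one]
    linarith
  have hr₀lt1 : r₀ < 1 := lt_of_le_of_lt hr₀le (by norm_num)
  -- continuity and IVT
  have hcont : ContinuousOn ψ (Set.Icc r₀ 1) := by
    apply ContinuousOn.sub ((Real.continuous_exp.comp (continuous_const.mul continuous_id)).continuousOn)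
    apply ContinuousOn.add continuousOn_const
    intro x hx
    exact (Real.continuousAt_rpow_const x p (Or.inl (lt_of_lt_of_le hr₀pos hx.1).ne')).continuousWithinAt
  have hIVT := intermediate_value_Ioo hr₀lt1.le hcont
  have h0mem : (0:ℝ) ∈ Set.Ioo (ψ r₀) (ψ 1) := ⟨hψr₀, hψ1⟩
  obtain ⟨δ, hδmem, hδ0⟩ := hIVT h0mem
  have hδpos : 0 < δ := lt_trans hr₀pos hδmem.1
  have hδlt1 : δ < 1 := hδmem.2
  -- key sign facts
  have key1 : ∀ r : ℝ, 0 ≤ r → r ≤ δ → ψ r ≤ 0 := by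
    intro r hr hrδ
    have ha : 0 ≤ 1 - r/δ := by
      rw [sub_nonneg]; exact div_le_one_of_le₀ hrδ hδpos.le
    have hb : 0 ≤ r/δ := div_nonneg hr hδpos.le
    have hab : (1 - r/δ) + r/δ = 1 := by ring
    have := hψ.convexOn.2 (Set.self_mem_Ici) (Set.mem_Ici.2 hδpos.le) ha hb hab
    simp only [smul_eq_mul, mul_zero, zero_add] at this
    rw [div_mul_cancel₀ r hδpos.ne'] at this
    rw [hψ0, hδ0] at this
    simpa using this
  have key2 : ∀ r : ℝ, δ < r → 0 < ψ r := by
    intro r hrδ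
    have hr₀r : r₀ < r := lt_trans hδmem.1 hrδ
    have hden : 0 < r - r₀ := by linarith
    set a : ℝ := (r - δ)/(r - r₀) with hadef
    set b : ℝ := (δ - r₀)/(r - r₀) with hbdef
    have ha : 0 < a := div_pos (by linarith) hden
    have hb : 0 < b := div_pos (by linarith [hδmem.1]) hden
    have hab : a + b = 1 := by
      rw [hadef, hbdef, ← add_div, div_eq_one_iff_eq hden.ne']; ring
    have hcomb : a * r₀ + b * r = δ := by
      rw [hadef, hbdef]; field_simp; ring
    have := hψ.2 (Set.mem_Ici.2 hr₀pos.le) (Set.mem_Ici.2 (le_of_lt (lt_trans hr₀pos hr₀r)))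
      (ne_of_lt hr₀r) ha hb hab
    simp only [smul_eq_mul, hcomb, hδ0] at this
    nlinarith [mul_pos ha (neg_pos.2 hψr₀)]
  refine ⟨δ, ⟨hδpos, hδlt1⟩, ?_, ?_⟩
  · intro ξ hξ
    set r := ‖ξ‖ with hrdef
    have hr : 0 ≤ r := norm_nonneg _
    have hψr := key1 r hr hξ
    have hx : (0:ℝ) < 1 + r ^ p := by positivity
    have hlog : 2 * r ≤ Real.log (1 + r ^ p) := by
      rw [Real.le_log_iff_exp_le hx]
      simp only [hψdef] at hψr
      linarith
    nlinarith [hlog, hr]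
  · intro ξ hξ
    set r := ‖ξ‖ with hrdef
    have hr : 0 ≤ r := norm_nonneg _
    have hψr := key2 r hξ
    have hx : (0:ℝ) < 1 + r ^ p := by positivity
    have hlognn : 0 ≤ Real.log (1 + r ^ p) :=
      Real.log_nonneg (by nlinarith [Real.rpow_nonneg hr p])
    have hlog : Real.log (1 + r ^ p) < 2 * r := by
      rw [Real.log_lt_iff_lt_exp hx]
      simp only [hψdef] at hψr
      linarith
    nlinarith [hlog, hlognn]
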